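/- Heilmann–Lieb theorem: all roots of the matching polynomial μ(G,x) of a finite graph G are real, and if all degrees of G are at most d with d ≥ 2, then every root λ satisfies |λ| ≤ 2√(d−1). -/

import Mathlib

open Classical

/-- `M` is a matching of `G`: a set of edges of `G` that are pairwise disjoint. -/
def IsMatchingSet {V : Type*} (G : SimpleGraph V) (M : Finset (Sym2 V)) : Prop :=
  (∀ e ∈ M, e ∈ G.edgeSet) ∧
    ∀ e ∈ M, ∀ f ∈ M, e ≠ f → ∀ v : V, ¬(v ∈ e ∧ v ∈ f)

/-- `m_k(G)`: the number of matchings of size `k`. -/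
noncomputable def numMatchings {V : Type*} (G : SimpleGraph V) (k : ℕ) : ℕ :=
  {M : Finset (Sym2 V) | IsMatchingSet G M ∧ M.card = k}.ncard

/-- The matching polynomial `μ(G,x) = Σ_k (-1)^k m_k(G) x^{v(G)-2k}`. -/
noncomputable def matchingPoly {V : Type*} [Fintype V] (G : SimpleGraph V) (x : ℂ) : ℂ :=
  ∑ k ∈ Finset.range (Fintype.card V / 2 + 1),
    (-1) ^ k * (numMatchings G k : ℂ) * x ^ (Fintype.card V - 2 * k)

namespace HLaux
variable {V : Type*} [Fintype V] (G : SimpleGraph V)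

noncomputable def allM (s : Finset V) : Finset (Finset (Sym2 V)) :=
  Finset.univ.filter (fun M => (∀ e ∈ M, e ∈ G.edgeSet ∧ ∀ v ∈ e, v ∈ s) ∧
    ∀ e ∈ M, ∀ f ∈ M, e ≠ f → ∀ v : V, ¬(v ∈ e ∧ v ∈ f))

lemma mem_allM {s : Finset V} {M : Finset (Sym2 V)} :
    M ∈ allM G s ↔ (∀ e ∈ M, e ∈ G.edgeSet ∧ ∀ v ∈ e, v ∈ s) ∧
      ∀ e ∈ M, ∀ f ∈ M, e ≠ f → ∀ v : V, ¬(v ∈ e ∧ v ∈ f) := by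
  simp [allM]

lemma filter_not_covered (u : V) (s : Finset V) :
    (allM G s).filter (fun M => ∀ e ∈ M, u ∉ e) = allM G (s.erase u) := by
  ext M
  simp only [Finset.mem_filter, mem_allM]
  constructor
  · rintro ⟨⟨h1, h2⟩, h3⟩
    exact ⟨fun e he => ⟨(h1 e he).1, fun v hv =>
      Finset.mem_erase.2 ⟨fun hvu => h3 e he (hvu ▸ hv), (h1 e he).2 v hv⟩⟩, h2⟩
  · rintro ⟨h1, h2⟩
    refine ⟨⟨fun e he => ⟨(h1 e he).1,
      fun v hv => Finset.mem_of_mem_erase ((h1 e he).2 v hv)⟩, h2⟩, ?_⟩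
    intro e he hue
    exact (Finset.mem_erase.1 ((h1 e he).2 u hue)).1 rfl

lemma filter_covered (u : V) (s : Finset V) :
    (allM G s).filter (fun M => ¬ ∀ e ∈ M, u ∉ e) =
      ((s.erase u).filter (G.Adj u)).biUnion
        (fun v => (allM G s).filter (fun M => s(u,v) ∈ M)) := by
  ext M
  simp only [Finset.mem_filter, Finset.mem_biUnion]
  constructor
  · rintro ⟨hM, h⟩
    push_neg at h
    obtain ⟨e, he, hue⟩ := h
    have hM' := (mem_allM G).1 hM
    have hev : s(u, Sym2.Mem.other hue) = e := Sym2.other_spec hue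
    have hadj : G.Adj u (Sym2.Mem.other hue) := by
      have := (hM'.1 e he).1
      rw [← hev, SimpleGraph.mem_edgeSet] at this
      exact this
    have hvs : Sym2.Mem.other hue ∈ s := (hM'.1 e he).2 _ (Sym2.other_mem hue)
    exact ⟨Sym2.Mem.other hue, ⟨Finset.mem_erase.2 ⟨hadj.ne', hvs⟩, hadj⟩, hM, by rwa [hev]⟩
  · rintro ⟨v, hv, hM, hvM⟩
    exact ⟨hM, fun h => h _ hvM (by simp)⟩

lemma covered_disjoint (u : V) (s : Finset V) :
    Set.PairwiseDisjoint (((s.erase u).filter (G.Adj u)) : Set V)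
      (fun v => (allM G s).filter (fun M => s(u,v) ∈ M)) := by
  intro v _ w _ hvw
  simp only [Function.onFun, Finset.disjoint_left]
  intro M hMv hMw
  rcases Finset.mem_filter.1 hMv with ⟨hM, h1⟩
  rcases Finset.mem_filter.1 hMw with ⟨_, h2⟩
  have hp := ((mem_allM G).1 hM).2
  by_cases heq : s(u,v) = s(u,w)
  · exact hvw (Sym2.congr_right.1 heq)
  · exact hp _ h1 _ h2 heq u ⟨by simp, by simp⟩

lemma erase_mem_allM {s : Finset V} {M : Finset (Sym2 V)} {u v : V}
    (hM : M ∈ allM G s) (he : s(u,v) ∈ M) :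
    M.erase s(u,v) ∈ allM G ((s.erase u).erase v) := by
  rw [mem_allM] at hM ⊢
  obtain ⟨h1, h2⟩ := hM
  constructor
  · intro f hf
    have hfM := Finset.mem_of_mem_erase hf
    have hfne : f ≠ s(u,v) := Finset.ne_of_mem_erase hf
    refine ⟨(h1 f hfM).1, fun w hw => ?_⟩
    have hws : w ∈ s := (h1 f hfM).2 w hw
    have hwv : w ≠ v := fun h => h2 f hfM _ he hfne w ⟨hw, by rw [h]; simp⟩
    have hwu : w ≠ u := fun h => h2 f hfM _ he hfne w ⟨hw, by rw [h]; simp⟩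
    exact Finset.mem_erase.2 ⟨hwv, Finset.mem_erase.2 ⟨hwu, hws⟩⟩
  · intro e he' f hf' hef
    exact h2 e (Finset.mem_of_mem_erase he') f (Finset.mem_of_mem_erase hf') hef

lemma insert_mem_allM {s : Finset V} {M' : Finset (Sym2 V)} {u v : V}
    (hM : M' ∈ allM G ((s.erase u).erase v)) (hadj : G.Adj u v)
    (hus : u ∈ s) (hvs : v ∈ s) :
    insert s(u,v) M' ∈ allM G s := by
  rw [mem_allM] at hM ⊢
  obtain ⟨h1, h2⟩ := hM
  have hnu : ∀ f ∈ M', u ∉ f ∧ v ∉ f := by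
    intro f hf
    constructor
    · intro h
      have := (h1 f hf).2 u h
      exact (Finset.mem_erase.1 (Finset.mem_of_mem_erase this)).1 rfl
    · intro h
      exact (Finset.mem_erase.1 ((h1 f hf).2 v h)).1 rfl
  constructor
  · intro e he
    rcases Finset.mem_insert.1 he with h | h
    · subst h
      exact ⟨G.mem_edgeSet.2 hadj, fun w hw => by
        rcases Sym2.mem_iff.1 hw with h | h <;> subst h <;> assumption⟩
    · exact ⟨(h1 e h).1, fun w hw =>
        Finset.mem_of_mem_erase (Finset.mem_of_mem_erase ((h1 e h).2 w hw))⟩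
  · intro e he f hf hef w hw
    rcases Finset.mem_insert.1 he with h | h <;> rcases Finset.mem_insert.1 hf with h' | h'
    · exact hef (h.trans h'.symm)
    · rcases Sym2.mem_iff.1 (h ▸ hw.1) with hh | hh <;>
        [exact (hnu f h').1 (hh ▸ hw.2); exact (hnu f h').2 (hh ▸ hw.2)]
    · rcases Sym2.mem_iff.1 (h' ▸ hw.2) with hh | hh <;>
        [exact (hnu e h).1 (hh ▸ hw.1); exact (hnu e h).2 (hh ▸ hw.1)]
    · exact h2 e h f h' hef w hw

lemma not_mem_of_allM_erase {s : Finset V} {M' : Finset (Sym2 V)} {u v : V}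
    (hM : M' ∈ allM G ((s.erase u).erase v)) : s(u,v) ∉ M' := by
  intro h
  have := (((mem_allM G).1 hM).1 _ h).2 u (by simp)
  exact (Finset.mem_erase.1 (Finset.mem_of_mem_erase this)).1 rfl

noncomputable def eF (e : Sym2 V) : Finset V := Finset.univ.filter (· ∈ e)

lemma card_eF {e : Sym2 V} (he : ¬ e.IsDiag) : (eF e).card = 2 := by
  induction e with
  | _ a b =>
    rw [Sym2.mk_isDiag_iff] at he
    have : eF s(a,b) = {a, b} := by
      ext w; simp [eF, Sym2.mem_iff]
    rw [this, Finset.card_insert_of_notMem (by simpa using he), Finset.card_singleton]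

lemma two_mul_card_le {s : Finset V} {M : Finset (Sym2 V)} (hM : M ∈ allM G s) :
    2 * M.card ≤ s.card := by
  rw [mem_allM] at hM
  have hdisj : ∀ e ∈ M, ∀ f ∈ M, e ≠ f → Disjoint (eF e) (eF f) := by
    intro e he f hf hef
    rw [Finset.disjoint_left]
    intro v hv hv'
    exact hM.2 e he f hf hef v ⟨by simpa [eF] using hv, by simpa [eF] using hv'⟩
  have hsub : M.biUnion eF ⊆ s := by
    intro v hv
    rcases Finset.mem_biUnion.1 hv with ⟨e, he, hv⟩
    exact (hM.1 e he).2 v (by simpa [eF] using hv)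
  calc 2 * M.card = ∑ e ∈ M, (eF e).card := by
        rw [Finset.sum_congr rfl (fun e he => card_eF (G.not_isDiag_of_mem_edgeSet (hM.1 e he).1))]
        simp [mul_comm]
    _ = (M.biUnion eF).card := (Finset.card_biUnion hdisj).symm
    _ ≤ s.card := Finset.card_le_card hsub

noncomputable def mp {R : Type*} [CommRing R] (s : Finset V) (x : R) : R :=
  ∑ M ∈ allM G s, (-1) ^ M.card * x ^ (s.card - 2 * M.card)

lemma sum_covered {R : Type*} [CommRing R] (x : R) {s : Finset V} {u v : V}
    (hu : u ∈ s) (hadj : G.Adj u v) (hvs : v ∈ s) :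
    ∑ M ∈ (allM G s).filter (fun M => s(u,v) ∈ M),
        ((-1:R) ^ M.card * x ^ (s.card - 2 * M.card))
      = - mp G ((s.erase u).erase v) x := by
  have htc : ((s.erase u).erase v).card = s.card - 1 - 1 := by
    rw [Finset.card_erase_of_mem (Finset.mem_erase.2 ⟨hadj.ne', hvs⟩),
      Finset.card_erase_of_mem hu]
  have hcard : 1 ≤ s.card := Finset.card_pos.2 ⟨u, hu⟩
  rw [mp, ← Finset.sum_neg_distrib]
  refine Finset.sum_bij' (fun M _ => M.erase s(u,v)) (fun M' _ => insert s(u,v) M')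
    ?_ ?_ ?_ ?_ ?_
  · intro M hM
    rcases Finset.mem_filter.1 hM with ⟨hM, he⟩
    exact erase_mem_allM G hM he
  · intro M' hM'
    exact Finset.mem_filter.2 ⟨insert_mem_allM G hM' hadj hu hvs, Finset.mem_insert_self _ _⟩
  · intro M hM
    exact Finset.insert_erase (Finset.mem_filter.1 hM).2
  · intro M' hM'
    exact Finset.erase_insert (not_mem_of_allM_erase G hM')
  · intro M hM
    rcases Finset.mem_filter.1 hM with ⟨hMs, he⟩
    have h2k : 2 * M.card ≤ s.card := two_mul_card_le G hMs
    have hk1 : 1 ≤ M.card := Finset.card_pos.2 ⟨_, he⟩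
    rw [Finset.card_erase_of_mem he, htc]
    have hexp : s.card - 2 * M.card = s.card - 1 - 1 - 2 * (M.card - 1) := by omega
    have hsgn : ((-1:R)) ^ M.card = -(-1 : R) ^ (M.card - 1) := by
      have : M.card = (M.card - 1) + 1 := by omega
      conv_lhs => rw [this, pow_succ]
      ring
    rw [hexp, hsgn]; ring

lemma mp_rec {R : Type*} [CommRing R] (x : R) {s : Finset V} {u : V} (hu : u ∈ s) :
    mp G s x = x * mp G (s.erase u) x -
      ∑ v ∈ (s.erase u).filter (G.Adj u), mp G ((s.erase u).erase v) x := by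
  have hcard : 1 ≤ s.card := Finset.card_pos.2 ⟨u, hu⟩
  have htc : (s.erase u).card = s.card - 1 := Finset.card_erase_of_mem hu
  rw [mp, ← Finset.sum_filter_add_sum_filter_not (allM G s) (fun M => ∀ e ∈ M, u ∉ e),
    filter_not_covered, filter_covered, Finset.sum_biUnion (covered_disjoint G u s)]
  have h1 : ∑ M ∈ allM G (s.erase u), ((-1:R) ^ M.card * x ^ (s.card - 2 * M.card))
      = x * mp G (s.erase u) x := by
    rw [mp, Finset.mul_sum]
    refine Finset.sum_congr rfl (fun M hM => ?_)
    have h2k := two_mul_card_le G hM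
    rw [htc] at h2k
    have : s.card - 2 * M.card = ((s.erase u).card - 2 * M.card) + 1 := by omega
    rw [this, pow_succ]; ring
  have h2 : ∀ v ∈ (s.erase u).filter (G.Adj u),
      (∑ M ∈ (allM G s).filter (fun M => s(u,v) ∈ M),
        ((-1:R) ^ M.card * x ^ (s.card - 2 * M.card)))
      = - mp G ((s.erase u).erase v) x := by
    intro v hv
    rcases Finset.mem_filter.1 hv with ⟨hv', hadj⟩
    exact sum_covered G x hu hadj (Finset.mem_of_mem_erase hv')
  rw [h1, Finset.sum_congr rfl h2, Finset.sum_neg_distrib]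
  ring


lemma allM_empty : allM G (∅ : Finset V) = {∅} := by
  ext M
  rw [mem_allM, Finset.mem_singleton]
  constructor
  · rintro ⟨h1, -⟩
    rw [Finset.eq_empty_iff_forall_notMem]
    intro e he
    exact absurd ((h1 e he).2 e.out.1 (Sym2.out_fst_mem e)) (Finset.notMem_empty _)
  · rintro rfl
    exact ⟨fun e he => absurd he (Finset.notMem_empty _),
      fun e he => absurd he (Finset.notMem_empty _)⟩

lemma mp_empty {R : Type*} [CommRing R] (x : R) : mp G (∅ : Finset V) x = 1 := by
  rw [mp, allM_empty]
  simp

lemma mpC_ne_zero : ∀ (s : Finset V) (z : ℂ), 0 < z.im →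
    mp G s z ≠ 0 ∧ ∀ u ∈ s, 0 < (mp G s z / mp G (s.erase u) z).im := by
  intro s
  induction s using Finset.strongInduction with
  | _ s IH =>
    intro z hz
    have hrat : ∀ u ∈ s, 0 < (mp G s z / mp G (s.erase u) z).im := by
      intro u hu
      obtain ⟨ht0, htr⟩ := IH _ (Finset.erase_ssubset hu) z hz
      rw [mp_rec G z hu]
      set t := s.erase u with ht
      have hdiv : (z * mp G t z - ∑ v ∈ t.filter (G.Adj u), mp G (t.erase v) z) / mp G t z
          = z - ∑ v ∈ t.filter (G.Adj u), mp G (t.erase v) z / mp G t z := by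
        rw [sub_div, mul_div_assoc, div_self ht0, mul_one, Finset.sum_div]
      rw [hdiv, Complex.sub_im]
      have hsum : (∑ v ∈ t.filter (G.Adj u), mp G (t.erase v) z / mp G t z).im ≤ 0 := by
        rw [Complex.im_sum]
        apply Finset.sum_nonpos
        intro v hv
        have hvt : v ∈ t := (Finset.mem_filter.1 hv).1
        have h := htr v hvt
        have hne : mp G t z / mp G (t.erase v) z ≠ 0 := by
          intro h0; rw [h0] at h; simp at h
        rw [show mp G (t.erase v) z / mp G t z
            = (mp G t z / mp G (t.erase v) z)⁻¹ from (inv_div _ _).symm, Complex.inv_im]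
        apply le_of_lt
        exact div_neg_of_neg_of_pos (neg_lt_zero.2 h) (Complex.normSq_pos.2 hne)
      linarith
    refine ⟨?_, hrat⟩
    rcases Finset.eq_empty_or_nonempty s with rfl | ⟨u, hu⟩
    · rw [mp_empty]; exact one_ne_zero
    · intro h0
      have := hrat u hu
      rw [h0, zero_div] at this
      simp at this

lemma mp_conj (s : Finset V) (z : ℂ) :
    mp G s ((starRingEnd ℂ) z) = (starRingEnd ℂ) (mp G s z) := by
  rw [mp, mp, map_sum]
  exact Finset.sum_congr rfl (fun M _ => by rw [map_mul, map_pow, map_pow, map_neg, map_one])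

lemma mp_ofReal (s : Finset V) (x : ℝ) :
    ((mp G s x : ℝ) : ℂ) = mp G s (x : ℂ) := by
  rw [mp, mp]
  push_cast
  rfl

lemma mp_neg {R : Type*} [CommRing R] (s : Finset V) (x : R) :
    mp G s (-x) = (-1) ^ s.card * mp G s x := by
  rw [mp, mp, Finset.mul_sum]
  refine Finset.sum_congr rfl (fun M hM => ?_)
  have h2k := two_mul_card_le G hM
  have hs : s.card = (s.card - 2 * M.card) + 2 * M.card := by omega
  have hsgn : ((-1 : R)) ^ s.card = (-1) ^ (s.card - 2 * M.card) := by
    conv_lhs => rw [hs]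
    rw [pow_add, pow_mul]
    norm_num
  rw [neg_pow, hsgn]
  ring


lemma mpR_pos {d : ℕ} (hd : 2 ≤ d) (hdeg : ∀ v : V, (G.neighborFinset v).card ≤ d) :
    ∀ (s : Finset V) (x : ℝ), 2 * Real.sqrt ((d : ℝ) - 1) < x →
      0 < mp G s x ∧ ∀ u ∈ s, ((s.erase u).filter (G.Adj u)).card + 1 ≤ d →
        Real.sqrt ((d : ℝ) - 1) < mp G s x / mp G (s.erase u) x := by
  set c := Real.sqrt ((d : ℝ) - 1) with hcdef
  have hd1 : (1 : ℝ) ≤ (d : ℝ) - 1 := by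
    have : (2 : ℝ) ≤ (d : ℝ) := by exact_mod_cast hd
    linarith
  have hcc : c * c = (d : ℝ) - 1 := Real.mul_self_sqrt (by linarith)
  have hc0 : 0 < c := Real.sqrt_pos.2 (by linarith)
  intro s
  induction s using Finset.strongInduction with
  | _ s IH =>
    intro x hx
    -- key ratio estimate
    have hkey : ∀ u ∈ s, x - (((s.erase u).filter (G.Adj u)).card : ℝ) * c⁻¹ ≤
        mp G s x / mp G (s.erase u) x := by
      intro u hu
      obtain ⟨ht0, htr⟩ := IH _ (Finset.erase_ssubset hu) x hx
      rw [mp_rec G x hu]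
      set t := s.erase u with ht
      have hdiv : (x * mp G t x - ∑ v ∈ t.filter (G.Adj u), mp G (t.erase v) x) / mp G t x
          = x - ∑ v ∈ t.filter (G.Adj u), mp G (t.erase v) x / mp G t x := by
        rw [sub_div, mul_div_assoc, div_self (ne_of_gt ht0), mul_one, Finset.sum_div]
      rw [hdiv]
      have hterm : ∀ v ∈ t.filter (G.Adj u), mp G (t.erase v) x / mp G t x ≤ c⁻¹ := by
        intro v hv
        rcases Finset.mem_filter.1 hv with ⟨hvt, hadj⟩
        -- degree condition for v inside t
        have hdcond : ((t.erase v).filter (G.Adj v)).card + 1 ≤ d := by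
          have hsub : (t.erase v).filter (G.Adj v) ⊆ (G.neighborFinset v).erase u := by
            intro w hw
            rcases Finset.mem_filter.1 hw with ⟨hwt, hadjw⟩
            refine Finset.mem_erase.2 ⟨?_, (G.mem_neighborFinset _ _).2 hadjw⟩
            exact (Finset.mem_erase.1 (Finset.mem_of_mem_erase hwt)).1
          have h1 : ((t.erase v).filter (G.Adj v)).card ≤ ((G.neighborFinset v).erase u).card :=
            Finset.card_le_card hsub
          have h2 : u ∈ G.neighborFinset v := (G.mem_neighborFinset _ _).2 hadj.symm
          have h3 : ((G.neighborFinset v).erase u).card = (G.neighborFinset v).card - 1 :=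
            Finset.card_erase_of_mem h2
          have h4 : 1 ≤ (G.neighborFinset v).card := Finset.card_pos.2 ⟨u, h2⟩
          have h5 := hdeg v
          omega
        have hr := htr v hvt hdcond
        have hrw : mp G (t.erase v) x / mp G t x = (mp G t x / mp G (t.erase v) x)⁻¹ :=
          (inv_div _ _).symm
        rw [hrw]
        have hrpos : 0 < mp G t x / mp G (t.erase v) x := lt_trans hc0 hr
        calc (mp G t x / mp G (t.erase v) x)⁻¹ ≤ c⁻¹ := by
              apply inv_anti₀ hc0 (le_of_lt hr)
          _ = c⁻¹ := rfl
      have hsum : ∑ v ∈ t.filter (G.Adj u), mp G (t.erase v) x / mp G t x ≤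
          ((t.filter (G.Adj u)).card : ℝ) * c⁻¹ := by
        calc ∑ v ∈ t.filter (G.Adj u), mp G (t.erase v) x / mp G t x
            ≤ ∑ _v ∈ t.filter (G.Adj u), c⁻¹ := Finset.sum_le_sum hterm
          _ = ((t.filter (G.Adj u)).card : ℝ) * c⁻¹ := by
              rw [Finset.sum_const, nsmul_eq_mul]
      linarith
    have hpos : 0 < mp G s x := by
      rcases Finset.eq_empty_or_nonempty s with rfl | ⟨u, hu⟩
      · rw [mp_empty]; norm_num
      · obtain ⟨ht0, -⟩ := IH _ (Finset.erase_ssubset hu) x hx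
        have hF : (((s.erase u).filter (G.Adj u)).card : ℝ) ≤ (d : ℝ) := by
          have hsub : (s.erase u).filter (G.Adj u) ⊆ G.neighborFinset u := by
            intro w hw
            exact (G.mem_neighborFinset _ _).2 (Finset.mem_filter.1 hw).2
          have := le_trans (Finset.card_le_card hsub) (hdeg u)
          exact_mod_cast this
        have hdc : (d : ℝ) * c⁻¹ ≤ 2 * c := by
          have h2d : (d : ℝ) ≤ 2 * ((d : ℝ) - 1) := by
            have : (2 : ℝ) ≤ (d : ℝ) := by exact_mod_cast hd
            linarith
          calc (d : ℝ) * c⁻¹ ≤ (2 * ((d : ℝ) - 1)) * c⁻¹ := by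
                apply mul_le_mul_of_nonneg_right h2d (le_of_lt (inv_pos.2 hc0))
            _ = 2 * (c * c) * c⁻¹ := by rw [hcc]
            _ = 2 * c := by field_simp
        have hrat : 0 < mp G s x / mp G (s.erase u) x := by
          have := hkey u hu
          have h1 : (((s.erase u).filter (G.Adj u)).card : ℝ) * c⁻¹ ≤ (d : ℝ) * c⁻¹ :=
            mul_le_mul_of_nonneg_right hF (le_of_lt (inv_pos.2 hc0))
          linarith
        have := mul_pos hrat ht0
        rwa [div_mul_cancel₀ _ (ne_of_gt ht0)] at this
    refine ⟨hpos, ?_⟩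
    intro u hu hdcond
    have := hkey u hu
    have hF : (((s.erase u).filter (G.Adj u)).card : ℝ) ≤ (d : ℝ) - 1 := by
      have : ((s.erase u).filter (G.Adj u)).card ≤ d - 1 := by omega
      have h2 : ((d : ℝ) - 1) = ((d - 1 : ℕ) : ℝ) := by
        have : 1 ≤ d := by omega
        push_cast [this]
        ring
      rw [h2]
      exact_mod_cast this
    have h1 : (((s.erase u).filter (G.Adj u)).card : ℝ) * c⁻¹ ≤ ((d : ℝ) - 1) * c⁻¹ :=
      mul_le_mul_of_nonneg_right hF (le_of_lt (inv_pos.2 hc0))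
    have h2 : ((d : ℝ) - 1) * c⁻¹ = c := by
      rw [← hcc]; field_simp
    linarith


lemma numMatchings_eq (k : ℕ) :
    numMatchings G k = ((allM G Finset.univ).filter (fun M => M.card = k)).card := by
  rw [numMatchings]
  have hset : {M : Finset (Sym2 V) | IsMatchingSet G M ∧ M.card = k}
      = ↑((allM G Finset.univ).filter (fun M => M.card = k)) := by
    ext M
    simp only [Set.mem_setOf_eq, Finset.coe_filter, IsMatchingSet, mem_allM,
      Finset.mem_univ, Finset.mem_coe, Finset.mem_filter]
    constructor
    · rintro ⟨⟨h1, h2⟩, h3⟩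
      exact ⟨⟨fun e he => ⟨h1 e he, fun v _ => trivial⟩, h2⟩, h3⟩
    · rintro ⟨⟨h1, h2⟩, h3⟩
      exact ⟨⟨fun e he => (h1 e he).1, h2⟩, h3⟩
  rw [hset, Set.ncard_coe_finset]

lemma matchingPoly_eq (z : ℂ) : matchingPoly G z = mp G Finset.univ z := by
  rw [matchingPoly, mp]
  simp only [Finset.card_univ]
  have hmaps : ∀ M ∈ allM G Finset.univ, M.card ∈ Finset.range (Fintype.card V / 2 + 1) := by
    intro M hM
    have := two_mul_card_le G hM
    rw [Finset.card_univ] at this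
    rw [Finset.mem_range]
    omega
  rw [← Finset.sum_fiberwise_of_maps_to hmaps
    (fun M => (-1) ^ M.card * z ^ (Fintype.card V - 2 * M.card))]
  refine Finset.sum_congr rfl (fun k hk => ?_)
  have hcongr : ∀ M ∈ (allM G Finset.univ).filter (fun M => M.card = k),
      (-1 : ℂ) ^ M.card * z ^ (Fintype.card V - 2 * M.card)
        = (-1) ^ k * z ^ (Fintype.card V - 2 * k) := by
    intro M hM
    rw [(Finset.mem_filter.1 hM).2]
  rw [Finset.sum_congr rfl hcongr, Finset.sum_const, nsmul_eq_mul, numMatchings_eq G k]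
  ring

lemma roots_real (z : ℂ) (hz : matchingPoly G z = 0) : z.im = 0 := by
  rw [matchingPoly_eq] at hz
  by_contra him
  rcases lt_or_gt_of_ne him with hlt | hgt
  · have h2 : (0 : ℝ) < ((starRingEnd ℂ) z).im := by
      rw [Complex.conj_im]; linarith
    have hne := (mpC_ne_zero G Finset.univ _ h2).1
    rw [mp_conj G] at hne
    exact hne (by rw [hz, map_zero])
  · exact (mpC_ne_zero G Finset.univ z hgt).1 hz


end HLaux

/-- Heilmann–Lieb: all roots of the matching polynomial are real, and if all
degrees are at most `d` with `d ≥ 2` then every root `λ` satisfies `|λ| ≤ 2√(d-1)`. -/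
theorem heilmann_lieb {V : Type*} [Fintype V] (G : SimpleGraph V) :
    (∀ z : ℂ, matchingPoly G z = 0 → z.im = 0) ∧
    (∀ d : ℕ, 2 ≤ d → (∀ v : V, (G.neighborSet v).ncard ≤ d) →
      ∀ z : ℂ, matchingPoly G z = 0 → ‖z‖ ≤ 2 * Real.sqrt ((d : ℝ) - 1)) := by
  refine ⟨HLaux.roots_real G, ?_⟩
  intro d hd hdeg z hz
  have him : z.im = 0 := HLaux.roots_real G z hz
  set x := z.re with hxdef
  have hzx : z = (x : ℂ) := by
    apply Complex.ext <;> simp [him, hxdef]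
  have hdeg' : ∀ v : V, (G.neighborFinset v).card ≤ d := by
    intro v
    have h := hdeg v
    rwa [Set.ncard_eq_toFinset_card'] at h
  rw [HLaux.matchingPoly_eq, hzx] at hz
  have hR : HLaux.mp G Finset.univ x = (0 : ℝ) := by
    have h := HLaux.mp_ofReal G Finset.univ x
    rw [hz] at h
    exact_mod_cast h
  have hc0 : (0 : ℝ) ≤ Real.sqrt ((d : ℝ) - 1) := Real.sqrt_nonneg _
  rw [hzx, Complex.norm_real, Real.norm_eq_abs, abs_le]
  constructor
  · by_contra h
    push_neg at h
    have hx : 2 * Real.sqrt ((d : ℝ) - 1) < -x := by linarith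
    have hpos := (HLaux.mpR_pos G hd hdeg' Finset.univ (-x) hx).1
    rw [HLaux.mp_neg, hR, mul_zero] at hpos
    exact lt_irrefl 0 hpos
  · by_contra h
    push_neg at h
    have hpos := (HLaux.mpR_pos G hd hdeg' Finset.univ x h).1
    rw [hR] at hpos
    exact lt_irrefl 0 hpos
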